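/- Let p be an odd prime, and let a, b ∈ Z/p with a ≠ b. For the 1×1 Goeritz matrix G = (-p) of the (p,2)-torus knot with coloring vector v having v ≡ b - a (mod p) lifted to an integer, the colored untying invariant cu = (v^T G v)/p mod p equals -(b-a)² mod p. Consequently, as a and b range over Z/p with a ≠ b, cu takes exactly (p-1)/2 distinct nonzero values, one for each nonzero square times -1 in Z/p. -/
import Mathlib

theorem cu_torus_knot
    (p : ℕ) (hp : p.Prime) [NeZero p] (hodd : Odd p)
    (a b : ZMod p) (hab : a ≠ b)
    (v : ℤ) (hv : (v : ZMod p) = b - a) :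
    (((v * (-(p : ℤ)) * v) / (p : ℤ) : ℤ) : ZMod p) = -(b - a)^2 ∧
    (Finset.image (fun x : (ZMod p)ˣ => -((x : ZMod p))^2) Finset.univ).card
      = (p - 1) / 2 := by
  haveI : Fact p.Prime := ⟨hp⟩
  have hp2 : p ≠ 2 := by rintro rfl; exact absurd hodd (by decide)
  haveI : Fact (2 < p) := ⟨lt_of_le_of_ne hp.two_le (Ne.symm hp2)⟩
  constructor
  · have hp0 : (p : ℤ) ≠ 0 := by exact_mod_cast (NeZero.ne p)
    have h : v * (-(p : ℤ)) * v = (p : ℤ) * (-(v * v)) := by ring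
    rw [h, Int.mul_ediv_cancel_left _ hp0]
    push_cast [hv]
    ring
  · set f : (ZMod p)ˣ →* (ZMod p)ˣ := powMonoidHom 2 with hf
    have hinj : Function.Injective (fun u : (ZMod p)ˣ => -(u : ZMod p)) :=
      fun u v h => Units.ext (by simpa using neg_injective h)
    have himg : (Finset.univ.image fun x : (ZMod p)ˣ => -((x : ZMod p))^2)
        = (Finset.univ.image f).image (fun u : (ZMod p)ˣ => -(u : ZMod p)) := by
      rw [Finset.image_image]
      refine Finset.image_congr ?_
      intro x _
      simp [hf, powMonoidHom]
    -- 1 ≠ -1 in units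
    have hone : (1 : (ZMod p)ˣ) ≠ -1 := by
      intro h
      have : (1 : ZMod p) = -1 := by
        have := congrArg (Units.val) h
        simpa using this
      exact ZMod.neg_one_ne_one this.symm
    -- kernel is {1, -1}
    have hker : (f.ker : Set (ZMod p)ˣ) = {1, -1} := by
      ext u
      simp only [SetLike.mem_coe, MonoidHom.mem_ker, hf, powMonoidHom_apply,
        Set.mem_insert_iff, Set.mem_singleton_iff]
      constructor
      · intro h
        have : ((u : ZMod p))^2 = 1 := by
          have := congrArg (Units.val) h
          simpa [Units.val_pow_eq_pow_val] using this
        rcases sq_eq_one_iff.mp this with h1 | h1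
        · left; exact Units.ext (by simpa using h1)
        · right; exact Units.ext (by simpa using h1)
      · rintro (rfl | rfl) <;> simp [pow_two]
    have hkcard : Nat.card f.ker = 2 := by
      have : Nat.card f.ker = (({1, -1} : Set (ZMod p)ˣ)).ncard := by
        rw [← hker]; exact Nat.card_coe_set_eq _
      rw [this, Set.ncard_pair hone]
    -- card of image equals card of range
    have hcard : (Finset.univ.image f).card = Nat.card f.range := by
      have hset : (f.range : Set (ZMod p)ˣ) = ↑(Finset.univ.image f) := by
        ext x; simp [MonoidHom.mem_range]
      have : Nat.card f.range = ((f.range : Set (ZMod p)ˣ)).ncard :=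
        Nat.card_coe_set_eq _
      rw [this, hset, Set.ncard_coe_finset]
    -- first isomorphism theorem counting
    have hquot : Nat.card ((ZMod p)ˣ) = Nat.card f.range * Nat.card f.ker := by
      rw [Subgroup.card_eq_card_quotient_mul_card_subgroup f.ker,
        Nat.card_congr (QuotientGroup.quotientKerEquivRange f).toEquiv]
    have hunits : Nat.card ((ZMod p)ˣ) = p - 1 := by
      rw [Nat.card_eq_fintype_card, ZMod.card_units]
    rw [himg, Finset.card_image_of_injective _ hinj, hcard]
    have : p - 1 = Nat.card f.range * 2 := by rw [← hunits, hquot, hkcard]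
    omega
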